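/- Let h : ℝ^n → ℝ be Lipschitz with constant η ≥ 0, let ε ≥ 0, let 0 < γ ≤ 1, and let x, x̂ : ℕ → ℝ^n be sequences such that (i) ‖x(k) − x̂(k)‖ ≤ ε for every k ∈ ℕ, (ii) h(x̂(k+1)) ≤ (1−γ)·h(x̂(k)) − γ·η·ε for every k ∈ ℕ, and (iii) h(x̂(0)) + η·ε ≤ 0. Then for every k ∈ ℕ, h(x̂(k)) + η·ε ≤ 0 and h(x(k)) ≤ 0; i.e., the safe set S = {z : h(z) ≤ 0} is forward invariant for the true trajectory x despite the control learning error, system identification error, and unknown disturbance. -/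
import Mathlib

/-- Robust forward invariance: if `h` is `η`-Lipschitz, the true trajectory
stays within `ε` of the nominal one, the nominal trajectory satisfies the
RCBF constraint `h(x̂(k+1)) ≤ (1−γ)h(x̂(k)) − γηε`, and initially
`h(x̂(0)) + ηε ≤ 0`, then for every `k`, `h(x̂(k)) + ηε ≤ 0` and
`h(x(k)) ≤ 0`: the safe set is forward invariant for the true trajectory. -/
theorem rcbf_forward_invariance {n : ℕ} (h : EuclideanSpace ℝ (Fin n) → ℝ)
    (η ε γ : ℝ) (hη : 0 ≤ η) (hε : 0 ≤ ε) (hγ0 : 0 < γ) (hγ1 : γ ≤ 1)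
    (hLip : ∀ a b : EuclideanSpace ℝ (Fin n), |h a - h b| ≤ η * ‖a - b‖)
    (x xhat : ℕ → EuclideanSpace ℝ (Fin n))
    (hd : ∀ k, ‖x k - xhat k‖ ≤ ε)
    (hcbf : ∀ k, h (xhat (k + 1)) ≤ (1 - γ) * h (xhat k) - γ * η * ε)
    (h0 : h (xhat 0) + η * ε ≤ 0) :
    ∀ k, h (xhat k) + η * ε ≤ 0 ∧ h (x k) ≤ 0 := by
  have key : ∀ k, h (xhat k) + η * ε ≤ 0 := by
    intro k
    induction k with
    | zero => exact h0
    | succ k ih =>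
      have := hcbf k
      nlinarith [mul_nonneg hη hε]
  intro k
  refine ⟨key k, ?_⟩
  have h1 := (abs_le.mp (hLip (x k) (xhat k))).2
  have h2 : η * ‖x k - xhat k‖ ≤ η * ε := mul_le_mul_of_nonneg_left (hd k) hη
  linarith [key k]
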